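/- For a 2×2 complex matrix X with normalized trace τ = (Tr X)/2, equality holds: ε(X) = ‖X − τI‖_∞ − ‖(|X − τI| + |X* − τ̄I|)/2‖_∞, and this common value equals ||x| − |y||/2 where X is unitarily equivalent to [[τ, y],[x, τ]]. -/

import Mathlib

open scoped Matrix ComplexOrder

noncomputable section

/-- The numerical range of a matrix. -/
def numRange {m : Type*} [Fintype m] (X : Matrix m m ℂ) : Set ℂ :=
  {z | ∃ v : m → ℂ, star v ⬝ᵥ v = 1 ∧ z = star v ⬝ᵥ X.mulVec v}

/-- The inradius of a subset of the plane: the radius of the largest disc it contains. -/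
def inRad (S : Set ℂ) : ℝ := sSup {r : ℝ | ∃ c : ℂ, Metric.closedBall c r ⊆ S}

/-- The indiameter: the diameter of the largest disc contained in the set. -/
def inDiam (S : Set ℂ) : ℝ := 2 * inRad S

/-- The numerical range of the compression of `X` to the subspace `S`. -/
def nrOn {m : Type*} [Fintype m] (X : Matrix m m ℂ) (S : Submodule ℂ (m → ℂ)) : Set ℂ :=
  {z | ∃ v ∈ S, star v ⬝ᵥ v = 1 ∧ z = star v ⬝ᵥ X.mulVec v}

/-- The elliptical width `δ₂(X)`: the supremum of the indiameters of the numerical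
ranges of compressions of `X` to two-dimensional subspaces. -/
def ellWidth {m : Type*} [Fintype m] (X : Matrix m m ℂ) : ℝ :=
  sSup {d | ∃ S : Submodule ℂ (m → ℂ), Module.finrank ℂ S = 2 ∧ d = inDiam (nrOn X S)}

/-- The operator (spectral) norm of a matrix. -/
def opNorm {m : Type*} [Fintype m] [DecidableEq m] (M : Matrix m m ℂ) : ℝ :=
  ‖Matrix.toEuclideanCLM (𝕜 := ℂ) M‖

/-- The Frobenius (Hilbert–Schmidt) norm of a matrix. -/
def frobNorm {m : Type*} [Fintype m] (M : Matrix m m ℂ) : ℝ :=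
  Real.sqrt ((Matrix.trace (Mᴴ * M)).re)

/-- Eigenvalues of a Hermitian matrix in decreasing order (junk value `0` otherwise):
`eigDesc M k` is the `(k+1)`-th largest eigenvalue of `M`. -/
def eigDesc {m : ℕ} (M : Matrix (Fin m) (Fin m) ℂ) (k : Fin m) : ℝ :=
  if h : M.IsHermitian then (h.eigenvalues ∘ Tuple.sort h.eigenvalues) k.rev else 0

/-- The absolute value `|X| = (XᴴX)^(1/2)` of a matrix. -/
def matAbs {m : Type*} [Fintype m] [DecidableEq m] (X : Matrix m m ℂ) : Matrix m m ℂ :=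
  ((Matrix.posSemidef_conjTranspose_mul_self X).1.eigenvectorUnitary : Matrix m m ℂ) *
    Matrix.diagonal ((↑) ∘ (√·) ∘ (Matrix.posSemidef_conjTranspose_mul_self X).1.eigenvalues) *
    (star (Matrix.posSemidef_conjTranspose_mul_self X).1.eigenvectorUnitary : Matrix m m ℂ)

/-- The `2n × 2n` block matrix `[[A, X],[Xᴴ, B]]`, reindexed by `Fin (n+n)`. -/
def blockR {n : ℕ} (A X B : Matrix (Fin n) (Fin n) ℂ) :
    Matrix (Fin (n + n)) (Fin (n + n)) ℂ :=
  (Matrix.fromBlocks A X Xᴴ B).submatrix finSumFinEquiv.symm finSumFinEquiv.symm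

/-- The operator norm distance from `X` to the scalar matrices. -/
def distScalar {m : Type*} [Fintype m] [DecidableEq m] (X : Matrix m m ℂ) : ℝ :=
  ⨅ a : ℂ, opNorm (X - a • 1)

/-- Apply a real function to a Hermitian matrix by the functional calculus
(junk value `0` if the matrix is not Hermitian). -/
def hermApply {m : Type*} [Fintype m] [DecidableEq m] (f : ℝ → ℝ) (M : Matrix m m ℂ) :
    Matrix m m ℂ :=
  if h : M.IsHermitian then h.cfc f else 0

end

section MatAbsAux

open scoped MatrixOrder

lemma matAbs_eq_sqrt (A : Matrix (Fin 2) (Fin 2) ℂ) : matAbs A = CFC.sqrt (Aᴴ * A) := by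
  have h0 : (0 : Matrix (Fin 2) (Fin 2) ℂ) ≤ Aᴴ * A :=
    Matrix.nonneg_iff_posSemidef.mpr (Matrix.posSemidef_conjTranspose_mul_self A)
  rw [CFC.sqrt_eq_real_sqrt _ h0, cfcₙ_eq_cfc (hf0 := by simp),
    Matrix.IsHermitian.cfc_eq (Matrix.posSemidef_conjTranspose_mul_self A).1]
  rfl

lemma matAbs_psd (A : Matrix (Fin 2) (Fin 2) ℂ) : (matAbs A).PosSemidef := by
  rw [matAbs_eq_sqrt]
  exact Matrix.nonneg_iff_posSemidef.mp (CFC.sqrt_nonneg _)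

lemma matAbs_mul_self (A : Matrix (Fin 2) (Fin 2) ℂ) : matAbs A * matAbs A = Aᴴ * A := by
  rw [matAbs_eq_sqrt]
  exact CFC.sqrt_mul_sqrt_self _
    (Matrix.nonneg_iff_posSemidef.mpr (Matrix.posSemidef_conjTranspose_mul_self A))

lemma matAbs_unique {A B : Matrix (Fin 2) (Fin 2) ℂ} (hB : B.PosSemidef)
    (h : B ^ 2 = Aᴴ * A) : matAbs A = B := by
  rw [matAbs_eq_sqrt]
  exact CFC.sqrt_unique (by rw [← h, pow_two]) (Matrix.nonneg_iff_posSemidef.mpr hB)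

end MatAbsAux

open scoped Matrix ComplexOrder Matrix.Norms.L2Operator

section Aux

lemma quad_conj (U B : Matrix (Fin 2) (Fin 2) ℂ) (w : Fin 2 → ℂ) :
    star (U *ᵥ w) ⬝ᵥ (B *ᵥ (U *ᵥ w)) = star w ⬝ᵥ ((Uᴴ * B * U) *ᵥ w) := by
  rw [Matrix.star_mulVec, Matrix.mulVec_mulVec, Matrix.dotProduct_mulVec,
    Matrix.vecMul_vecMul, ← Matrix.dotProduct_mulVec, Matrix.mul_assoc]

lemma numRange_conj (A : Matrix (Fin 2) (Fin 2) ℂ) (U : Matrix.unitaryGroup (Fin 2) ℂ) :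
    numRange ((U : Matrix (Fin 2) (Fin 2) ℂ) * A * (U : Matrix (Fin 2) (Fin 2) ℂ)ᴴ) = numRange A := by
  set V : Matrix (Fin 2) (Fin 2) ℂ := (U : Matrix (Fin 2) (Fin 2) ℂ) with hV
  have hU1 : V * Vᴴ = 1 := by
    simpa [Matrix.star_eq_conjTranspose] using Unitary.mul_star_self_of_mem U.2
  have hU2 : Vᴴ * V = 1 := by
    simpa [Matrix.star_eq_conjTranspose] using Unitary.star_mul_self_of_mem U.2
  ext z
  constructor
  · rintro ⟨v, hv, rfl⟩
    refine ⟨Vᴴ *ᵥ v, ?_, ?_⟩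
    · have h := quad_conj Vᴴ 1 v
      rw [Matrix.one_mulVec] at h
      rw [h, Matrix.conjTranspose_conjTranspose, Matrix.mul_one, hU1, Matrix.one_mulVec, hv]
    · have h := quad_conj Vᴴ A v
      rw [h, Matrix.conjTranspose_conjTranspose]
  · rintro ⟨w, hw, rfl⟩
    refine ⟨V *ᵥ w, ?_, ?_⟩
    · have h := quad_conj V 1 w
      rw [Matrix.one_mulVec] at h
      rw [h, Matrix.mul_one, hU2, Matrix.one_mulVec, hw]
    · have h := quad_conj V (V * A * Vᴴ) w
      rw [h]
      congr 1
      have : Vᴴ * (V * A * Vᴴ) * V = (Vᴴ * V) * A * (Vᴴ * V) := by noncomm_ring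
      rw [this, hU2, Matrix.one_mul, Matrix.mul_one]

lemma numRange_param (τ x y : ℂ) :
    numRange !![τ, y; x, τ] =
      {z | ∃ s : ℂ, ‖s‖ ≤ 1/2 ∧ z = τ + x * s + y * (starRingEnd ℂ) s} := by
  ext z
  constructor
  · rintro ⟨v, hv, rfl⟩
    set a := v 0 with ha
    set b := v 1 with hb
    have hv' : (starRingEnd ℂ) a * a + (starRingEnd ℂ) b * b = 1 := by
      simpa [dotProduct, Fin.sum_univ_two] using hv
    have hre : ‖a‖ ^ 2 + ‖b‖ ^ 2 = 1 := by
      rw [Complex.sq_norm, Complex.sq_norm, Complex.normSq_apply, Complex.normSq_apply]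
      have h1 := congrArg Complex.re hv'
      simp [Complex.add_re, Complex.mul_re] at h1
      linarith
    have hexp : star v ⬝ᵥ (!![τ, y; x, τ] *ᵥ v)
        = (starRingEnd ℂ) a * (τ * a + y * b) + (starRingEnd ℂ) b * (x * a + τ * b) := by
      simp [dotProduct, Matrix.mulVec, Fin.sum_univ_two, ha, hb]
    refine ⟨a * (starRingEnd ℂ) b, ?_, ?_⟩
    · rw [norm_mul, Complex.norm_conj]
      nlinarith [sq_nonneg (‖a‖ - ‖b‖), norm_nonneg a,
        norm_nonneg b]
    · rw [hexp, map_mul, Complex.conj_conj]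
      linear_combination τ * hv'
  · rintro ⟨s, hs, rfl⟩
    set t := Real.sqrt (1/4 - ‖s‖ ^ 2) with ht
    have hs2 : ‖s‖ ^ 2 ≤ 1/4 := by nlinarith [norm_nonneg s]
    have ht2 : t ^ 2 = 1/4 - ‖s‖ ^ 2 := Real.sq_sqrt (by linarith)
    have htnn : 0 ≤ t := Real.sqrt_nonneg _
    set α : ℝ := Real.sqrt (1/2 + t) with hα
    have hαpos : 0 < α := Real.sqrt_pos.2 (by linarith)
    have hα2 : α ^ 2 = 1/2 + t := Real.sq_sqrt (by linarith)
    set β : ℝ := α⁻¹ with hβ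
    have hαβr : α * β = 1 := mul_inv_cancel₀ hαpos.ne'
    have hαβ : (α : ℂ) * (β : ℂ) = 1 := by exact_mod_cast congrArg Complex.ofReal hαβr
    have habs : s * (starRingEnd ℂ) s = ((‖s‖ ^ 2 : ℝ) : ℂ) := by
      rw [Complex.mul_conj, Complex.normSq_eq_norm_sq]
    have hr : α * α + (β * β) * ‖s‖ ^ 2 = 1 := by
      have hd : ‖s‖ ^ 2 = 1/4 - t^2 := by linarith
      have hαα : α * α = 1/2 + t := by nlinarith
      have hββ : β * β = (1/2 + t)⁻¹ := by
        rw [hβ, ← mul_inv, hαα]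
      rw [hd, hαα, hββ]
      have h0 : (1/2 + t) ≠ 0 := by linarith
      field_simp
      ring
    have hone : (α:ℂ) * (α:ℂ) + ((β:ℂ) * (β:ℂ)) * (s * (starRingEnd ℂ) s) = 1 := by
      rw [habs]
      exact_mod_cast congrArg Complex.ofReal hr
    refine ⟨![(α : ℂ), (β : ℂ) * (starRingEnd ℂ) s], ?_, ?_⟩
    · have hexp : star ![(α : ℂ), (β:ℂ) * (starRingEnd ℂ) s] ⬝ᵥ ![(α : ℂ), (β:ℂ) * (starRingEnd ℂ) s]
          = (α:ℂ) * (α:ℂ) + ((β:ℂ) * s) * ((β:ℂ) * (starRingEnd ℂ) s) := by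
        simp [dotProduct, Fin.sum_univ_two, Complex.conj_ofReal, map_mul]
      rw [hexp]
      linear_combination hone
    · have hexp : star ![(α : ℂ), (β:ℂ) * (starRingEnd ℂ) s] ⬝ᵥ
          (!![τ, y; x, τ] *ᵥ ![(α : ℂ), (β:ℂ) * (starRingEnd ℂ) s])
          = (α:ℂ) * (τ * (α:ℂ) + y * ((β:ℂ) * (starRingEnd ℂ) s))
            + ((β:ℂ) * s) * (x * (α:ℂ) + τ * ((β:ℂ) * (starRingEnd ℂ) s)) := by
        simp [dotProduct, Matrix.mulVec, Fin.sum_univ_two, Complex.conj_ofReal, map_mul]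
      rw [hexp]
      linear_combination (-τ) * hone - (y * (starRingEnd ℂ) s + x * s) * hαβ

-- direction vector lemma
lemma exists_dir (x y : ℂ) : ∃ u : ℂ, ‖u‖ = 1 ∧
    ‖(starRingEnd ℂ) u * x - u * (starRingEnd ℂ) y‖
      = |‖x‖ - ‖y‖| := by
  by_cases hx : x = 0
  · refine ⟨1, by simp, ?_⟩
    simp [hx, Complex.norm_conj, abs_of_nonneg (norm_nonneg y)]
  by_cases hy : y = 0
  · refine ⟨1, by simp, ?_⟩
    simp [hy, abs_of_nonneg (norm_nonneg x)]
  set A := ‖x‖ with hA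
  set B := ‖y‖ with hB
  have hApos : 0 < A := norm_pos_iff.mpr hx
  have hBpos : 0 < B := norm_pos_iff.mpr hy
  set c : ℂ := ((B:ℂ) * x) / ((A:ℂ) * (starRingEnd ℂ) y) with hc
  obtain ⟨u, hu⟩ := IsAlgClosed.exists_pow_nat_eq c (n := 2) (by norm_num)
  have hyne : (starRingEnd ℂ) y ≠ 0 := by simpa using hy
  have hAne : (A:ℂ) ≠ 0 := by exact_mod_cast hApos.ne'
  have hBne : (B:ℂ) ≠ 0 := by exact_mod_cast hBpos.ne'
  have habsc : ‖c‖ = 1 := by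
    rw [hc, norm_div, norm_mul, norm_mul, Complex.norm_conj, Complex.norm_real, Real.norm_eq_abs,
      Complex.norm_real, Real.norm_eq_abs, abs_of_pos hApos, abs_of_pos hBpos, ← hA, ← hB]
    field_simp
  have hu1 : ‖u‖ = 1 := by
    have h2 : ‖u‖ ^ 2 = 1 := by
      rw [← norm_pow, hu, habsc]
    nlinarith [norm_nonneg u]
  have huu : u * (starRingEnd ℂ) u = 1 := by
    have := Complex.mul_conj u
    rw [Complex.normSq_eq_norm_sq, hu1] at this
    simpa using this
  have hu' : u^2 * ((A:ℂ) * (starRingEnd ℂ) y) = (B:ℂ) * x := by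
    rw [hu, hc]
    field_simp
  refine ⟨u, hu1, ?_⟩
  have h2 : (starRingEnd ℂ) u * x - u * (starRingEnd ℂ) y
      = (starRingEnd ℂ) u * x * (((A:ℂ) - (B:ℂ)) / (A:ℂ)) := by
    field_simp
    linear_combination (u * (starRingEnd ℂ) y * (A:ℂ)) * huu - (starRingEnd ℂ) u * hu'
  rw [h2, norm_mul, norm_mul, Complex.norm_conj, hu1, norm_div]
  rw [show (A:ℂ) - (B:ℂ) = ((A - B : ℝ) : ℂ) by push_cast; ring]
  rw [Complex.norm_real, Real.norm_eq_abs, Complex.norm_real, Real.norm_eq_abs, abs_of_pos hApos, ← hA]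
  field_simp

lemma inRad_ellipse (τ x y : ℂ) :
    inRad {z | ∃ s : ℂ, ‖s‖ ≤ 1/2 ∧ z = τ + x * s + y * (starRingEnd ℂ) s}
      = |‖x‖ - ‖y‖| / 2 := by
  set A := ‖x‖ with hA
  set B := ‖y‖ with hB
  set b := |A - B| / 2 with hb
  have hbnn : 0 ≤ b := by positivity
  set E := {z | ∃ s : ℂ, ‖s‖ ≤ 1/2 ∧ z = τ + x * s + y * (starRingEnd ℂ) s} with hE
  -- the ball of radius b around τ is contained in E
  have hmem : Metric.closedBall τ b ⊆ E := by
    intro z hz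
    rw [Metric.mem_closedBall, Complex.dist_eq] at hz
    by_cases hAB : A = B
    · have hb0 : b = 0 := by rw [hb, hAB]; simp
      have hzτ : z = τ := by
        have h0 : ‖z - τ‖ = 0 :=
          le_antisymm (by rw [← hb0]; exact hz) (norm_nonneg _)
        exact sub_eq_zero.mp (norm_eq_zero.mp h0)
      exact ⟨0, by norm_num, by simp [hzτ]⟩
    · set D : ℝ := Complex.normSq x - Complex.normSq y with hD
      have hNA : Complex.normSq x = A ^ 2 := by rw [Complex.normSq_eq_norm_sq]
      have hNB : Complex.normSq y = B ^ 2 := by rw [Complex.normSq_eq_norm_sq]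
      have hABpos : 0 < A + B := by
        rcases lt_or_ge 0 (A + B) with h | h
        · exact h
        · exfalso
          have hA0 : 0 ≤ A := norm_nonneg x
          have hB0 : 0 ≤ B := norm_nonneg y
          have : A = 0 ∧ B = 0 := ⟨le_antisymm (by linarith) hA0, le_antisymm (by linarith) hB0⟩
          exact hAB (by rw [this.1, this.2])
      have hdpos : 0 < |A - B| := abs_pos.2 (sub_ne_zero.2 hAB)
      have hDne : D ≠ 0 := by
        rw [hD, hNA, hNB]
        intro h
        have : (A - B) * (A + B) = 0 := by ring_nf; linarith [h]
        rcases mul_eq_zero.mp this with h' | h'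
        · exact hAB (by linarith)
        · linarith
      have hDCne : (D : ℂ) ≠ 0 := by exact_mod_cast hDne
      set s : ℂ := ((starRingEnd ℂ) x * (z - τ) - y * (starRingEnd ℂ) (z - τ)) / (D : ℂ) with hs
      have hconj : (starRingEnd ℂ) s
          = (x * (starRingEnd ℂ) (z - τ) - (starRingEnd ℂ) y * (z - τ)) / (D : ℂ) := by
        rw [hs, map_div₀, map_sub, map_mul, map_mul, Complex.conj_conj, Complex.conj_conj,
          Complex.conj_ofReal]
      refine ⟨s, ?_, ?_⟩
      · -- |s| ≤ 1/2
        have hnum : ‖(starRingEnd ℂ) x * (z - τ) - y * (starRingEnd ℂ) (z - τ)‖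
            ≤ (A + B) * ‖z - τ‖ := by
          calc ‖(starRingEnd ℂ) x * (z - τ) - y * (starRingEnd ℂ) (z - τ)‖
              ≤ ‖(starRingEnd ℂ) x * (z - τ)‖
                + ‖y * (starRingEnd ℂ) (z - τ)‖ := by
                simpa [sub_eq_add_neg] using
                  norm_add_le ((starRingEnd ℂ) x * (z - τ)) (-(y * (starRingEnd ℂ) (z - τ)))
            _ = (A + B) * ‖z - τ‖ := by
                rw [norm_mul, norm_mul, Complex.norm_conj, Complex.norm_conj]; ring
        have habsD : |D| = |A - B| * (A + B) := by
          rw [hD, hNA, hNB, show A^2 - B^2 = (A - B) * (A + B) by ring, abs_mul,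
            abs_of_pos hABpos]
        have : ‖s‖ = ‖(starRingEnd ℂ) x * (z - τ) - y * (starRingEnd ℂ) (z - τ)‖ / |D| := by
          rw [hs, norm_div, Complex.norm_real, Real.norm_eq_abs]
        rw [this, habsD, div_le_iff₀ (by positivity)]
        nlinarith [norm_nonneg (z - τ)]
      · -- z = τ + x s + y s̄
        rw [hconj, hs]
        have hx' := Complex.mul_conj x
        have hy' := Complex.mul_conj y
        have hDC : (D : ℂ) = ((Complex.normSq x : ℝ) : ℂ) - ((Complex.normSq y : ℝ) : ℂ) := by
          rw [hD]; push_cast; ring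
        field_simp
        linear_combination (z - τ) * hDC - (z - τ) * hx' + (z - τ) * hy'
  -- upper bound
  have hub : ∀ r ∈ {r : ℝ | ∃ c : ℂ, Metric.closedBall c r ⊆ E}, r ≤ b := by
    rintro r ⟨c, hc⟩
    rcases le_or_gt r 0 with hr | hr
    · linarith
    obtain ⟨u, hu1, hkey⟩ := exists_dir x y
    have huu : u * (starRingEnd ℂ) u = 1 := by
      have := Complex.mul_conj u
      rw [Complex.normSq_eq_norm_sq, hu1] at this
      simpa using this
    have hstrip : ∀ z ∈ E, |((starRingEnd ℂ) u * (z - τ)).im| ≤ b := by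
      rintro z ⟨s, hs, rfl⟩
      have hsplit : (starRingEnd ℂ) u * (τ + x * s + y * (starRingEnd ℂ) s - τ)
          = ((starRingEnd ℂ) u * x - u * (starRingEnd ℂ) y) * s
            + (u * (starRingEnd ℂ) y * s + (starRingEnd ℂ) (u * (starRingEnd ℂ) y * s)) := by
        rw [map_mul, map_mul, Complex.conj_conj]
        ring
      rw [hsplit, Complex.add_im, Complex.add_conj, Complex.ofReal_im, add_zero]
      calc |(((starRingEnd ℂ) u * x - u * (starRingEnd ℂ) y) * s).im|
          ≤ ‖((starRingEnd ℂ) u * x - u * (starRingEnd ℂ) y) * s‖ :=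
            Complex.abs_im_le_norm _
        _ = |A - B| * ‖s‖ := by rw [norm_mul, hkey]
        _ ≤ |A - B| * (1/2) := by
            exact mul_le_mul_of_nonneg_left hs (abs_nonneg _)
        _ = b := by rw [hb]; ring
    have hzp : c + (r : ℂ) * (Complex.I * u) ∈ E := by
      apply hc
      rw [Metric.mem_closedBall, Complex.dist_eq]
      have : ‖c + (r:ℂ) * (Complex.I * u) - c‖ = r := by
        rw [show c + (r:ℂ) * (Complex.I * u) - c = (r:ℂ) * (Complex.I * u) by ring,
          norm_mul, norm_mul, Complex.norm_I, Complex.norm_real, Real.norm_eq_abs, hu1, abs_of_pos hr]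
        ring
      exact le_of_eq this
    have hzm : c - (r : ℂ) * (Complex.I * u) ∈ E := by
      apply hc
      rw [Metric.mem_closedBall, Complex.dist_eq]
      have : ‖c - (r:ℂ) * (Complex.I * u) - c‖ = r := by
        rw [show c - (r:ℂ) * (Complex.I * u) - c = -((r:ℂ) * (Complex.I * u)) by ring,
          norm_neg, norm_mul, norm_mul, Complex.norm_I, Complex.norm_real, Real.norm_eq_abs, hu1, abs_of_pos hr]
        ring
      exact le_of_eq this
    have hp := hstrip _ hzp
    have hm := hstrip _ hzm
    have ep : (starRingEnd ℂ) u * (c + (r:ℂ) * (Complex.I * u) - τ)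
        = (starRingEnd ℂ) u * (c - τ) + (r:ℂ) * Complex.I := by
      linear_combination ((r:ℂ) * Complex.I) * huu
    have em : (starRingEnd ℂ) u * (c - (r:ℂ) * (Complex.I * u) - τ)
        = (starRingEnd ℂ) u * (c - τ) - (r:ℂ) * Complex.I := by
      linear_combination (-(r:ℂ) * Complex.I) * huu
    rw [ep, Complex.add_im] at hp
    rw [em, Complex.sub_im] at hm
    have him : ((r:ℂ) * Complex.I).im = r := by simp
    rw [him] at hp hm
    rw [abs_le] at hp hm
    linarith [hp.1, hp.2, hm.1, hm.2]
  -- conclude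
  unfold inRad
  have hbm : b ∈ {r : ℝ | ∃ c : ℂ, Metric.closedBall c r ⊆ E} := ⟨τ, hmem⟩
  exact le_antisymm (csSup_le ⟨b, hbm⟩ hub) (le_csSup ⟨b, hub⟩ hbm)

lemma opNorm_eq (M : Matrix (Fin 2) (Fin 2) ℂ) : opNorm M = ‖M‖ := rfl

lemma opNorm_conj (A : Matrix (Fin 2) (Fin 2) ℂ) (U : Matrix.unitaryGroup (Fin 2) ℂ) :
    opNorm ((U : Matrix (Fin 2) (Fin 2) ℂ) * A * (U : Matrix (Fin 2) (Fin 2) ℂ)ᴴ) = opNorm A := by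
  rw [opNorm_eq, opNorm_eq]
  have h1 : ‖(U : Matrix (Fin 2) (Fin 2) ℂ) * A * (U : Matrix (Fin 2) (Fin 2) ℂ)ᴴ‖
      = ‖(U : Matrix (Fin 2) (Fin 2) ℂ) * (A * (U : Matrix (Fin 2) (Fin 2) ℂ)ᴴ)‖ := by
    rw [mul_assoc]
  rw [h1, CStarRing.norm_coe_unitary_mul U]
  have : (U : Matrix (Fin 2) (Fin 2) ℂ)ᴴ = ((star U : Matrix.unitaryGroup (Fin 2) ℂ) :
      Matrix (Fin 2) (Fin 2) ℂ) := rfl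
  rw [this, CStarRing.norm_mul_coe_unitary]

lemma matAbs_conj (A : Matrix (Fin 2) (Fin 2) ℂ) (U : Matrix.unitaryGroup (Fin 2) ℂ) :
    matAbs ((U : Matrix (Fin 2) (Fin 2) ℂ) * A * (U : Matrix (Fin 2) (Fin 2) ℂ)ᴴ)
      = (U : Matrix (Fin 2) (Fin 2) ℂ) * matAbs A * (U : Matrix (Fin 2) (Fin 2) ℂ)ᴴ := by
  set V : Matrix (Fin 2) (Fin 2) ℂ := (U : Matrix (Fin 2) (Fin 2) ℂ) with hV
  have hU1 : V * Vᴴ = 1 := by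
    simpa [Matrix.star_eq_conjTranspose] using Unitary.mul_star_self_of_mem U.2
  have hU2 : Vᴴ * V = 1 := by
    simpa [Matrix.star_eq_conjTranspose] using Unitary.star_mul_self_of_mem U.2
  have hPSD : (V * matAbs A * Vᴴ).PosSemidef := by
    have h := matAbs_psd A
    have := h.mul_mul_conjTranspose_same V
    simpa [Matrix.mul_assoc] using this
  have hsq : (V * matAbs A * Vᴴ) ^ 2 = (V * A * Vᴴ)ᴴ * (V * A * Vᴴ) := by
    have habs2 : matAbs A * matAbs A = Aᴴ * A :=
      matAbs_mul_self A
    have e1 : (V * matAbs A * Vᴴ) ^ 2 = V * (matAbs A * (Vᴴ * V) * matAbs A) * Vᴴ := by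
      rw [pow_two]; noncomm_ring
    rw [e1, hU2, Matrix.mul_one, habs2, Matrix.conjTranspose_mul, Matrix.conjTranspose_mul,
      Matrix.conjTranspose_conjTranspose]
    have e2 : V * (Aᴴ * Vᴴ) * (V * A * Vᴴ) = V * Aᴴ * (Vᴴ * V) * (A * Vᴴ) := by noncomm_ring
    rw [e2, hU2, Matrix.mul_one]
    noncomm_ring
  exact matAbs_unique hPSD hsq

lemma matAbs_N (x y : ℂ) :
    matAbs !![0, y; x, 0] =
      Matrix.diagonal ![((‖x‖ : ℝ) : ℂ), ((‖y‖ : ℝ) : ℂ)] := by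
  have hPSD : (Matrix.diagonal ![((‖x‖ : ℝ) : ℂ), ((‖y‖ : ℝ) : ℂ)]).PosSemidef := by
    rw [Matrix.posSemidef_diagonal_iff]
    intro i
    fin_cases i <;> simp [Complex.zero_le_real, norm_nonneg]
  have hsq : (Matrix.diagonal ![((‖x‖ : ℝ) : ℂ), ((‖y‖ : ℝ) : ℂ)]) ^ 2
      = !![0, y; x, 0]ᴴ * !![0, y; x, 0] := by
    rw [pow_two, Matrix.diagonal_mul_diagonal]
    ext i j
    fin_cases i <;> fin_cases j <;>
      simp [Matrix.mul_apply, Fin.sum_univ_two, Matrix.diagonal, ← Complex.ofReal_mul,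
        Complex.normSq_eq_norm_sq, pow_two, Complex.mul_conj, mul_comm]
  exact matAbs_unique hPSD hsq

lemma opNorm_smul_one (r : ℝ) :
    opNorm (((r : ℂ)) • (1 : Matrix (Fin 2) (Fin 2) ℂ)) = |r| := by
  have : opNorm (((r : ℂ)) • (1 : Matrix (Fin 2) (Fin 2) ℂ))
      = ‖((r : ℂ)) • (1 : Matrix (Fin 2) (Fin 2) ℂ)‖ := rfl
  rw [this, norm_smul, CStarRing.norm_one, mul_one, Complex.norm_real, Real.norm_eq_abs]

lemma opNorm_N (x y : ℂ) : opNorm !![0, y; x, 0] = max (‖x‖) (‖y‖) := by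
  set N : Matrix (Fin 2) (Fin 2) ℂ := !![0, y; x, 0] with hN
  set T := Matrix.toEuclideanCLM (𝕜 := ℂ) N with hT
  have happ : ∀ v : EuclideanSpace ℂ (Fin 2), ∀ i, (T v) i = (N *ᵥ (WithLp.ofLp v)) i := by
    intro v i
    have := Matrix.ofLp_toEuclideanCLM (𝕜 := ℂ) N v
    exact congrFun this i
  have hmax0 : 0 ≤ max (‖x‖) (‖y‖) :=
    le_max_of_le_left (norm_nonneg x)
  apply le_antisymm
  · apply ContinuousLinearMap.opNorm_le_bound _ hmax0
    intro v
    set M := max (‖x‖) (‖y‖) with hM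
    have h0 : (T v) 0 = y * v 1 := by
      rw [happ v 0]
      simp [Matrix.mulVec, dotProduct, Fin.sum_univ_two, hN]
    have h1 : (T v) 1 = x * v 0 := by
      rw [happ v 1]
      simp [Matrix.mulVec, dotProduct, Fin.sum_univ_two, hN]
    rw [EuclideanSpace.norm_eq, EuclideanSpace.norm_eq]
    rw [show ∑ i, ‖(T v) i‖ ^ 2 = ‖y * v 1‖^2 + ‖x * v 0‖^2 by
      rw [Fin.sum_univ_two, h0, h1]]
    rw [show ∑ i, ‖v i‖ ^ 2 = ‖v 0‖^2 + ‖v 1‖^2 by rw [Fin.sum_univ_two]]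
    rw [show M * Real.sqrt (‖v 0‖^2 + ‖v 1‖^2)
        = Real.sqrt (M^2 * (‖v 0‖^2 + ‖v 1‖^2)) by
      rw [Real.sqrt_mul (by positivity), Real.sqrt_sq hmax0]]
    apply Real.sqrt_le_sqrt
    have hx : ‖x‖ ≤ M := le_max_left _ _
    have hy : ‖y‖ ≤ M := le_max_right _ _
    have e0 : ‖y * v 1‖ = ‖y‖ * ‖v 1‖ := by
      rw [norm_mul]
    have e1 : ‖x * v 0‖ = ‖x‖ * ‖v 0‖ := by
      rw [norm_mul]
    rw [e0, e1]
    nlinarith [mul_le_mul_of_nonneg_right (pow_le_pow_left₀ (norm_nonneg x) hx 2) (sq_nonneg ‖v 0‖),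
      mul_le_mul_of_nonneg_right (pow_le_pow_left₀ (norm_nonneg y) hy 2) (sq_nonneg ‖v 1‖)]
  · apply max_le
    · have hv : ‖(EuclideanSpace.single 0 1 : EuclideanSpace ℂ (Fin 2))‖ = 1 := by
        rw [EuclideanSpace.norm_single]; norm_num
      have hb := T.le_opNorm (EuclideanSpace.single 0 1)
      rw [hv, mul_one] at hb
      refine le_trans (le_of_eq ?_) hb
      rw [EuclideanSpace.norm_eq]
      have h0 : (T (EuclideanSpace.single 0 1)) 0 = 0 := by
        rw [happ]
        simp [Matrix.mulVec, dotProduct, Fin.sum_univ_two, hN, EuclideanSpace.single_apply]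
      have h1 : (T (EuclideanSpace.single 0 1)) 1 = x := by
        rw [happ]
        simp [Matrix.mulVec, dotProduct, Fin.sum_univ_two, hN, EuclideanSpace.single_apply]
      rw [show ∑ i, ‖(T (EuclideanSpace.single 0 1)) i‖ ^ 2 = ‖(0:ℂ)‖^2 + ‖x‖^2 by
        rw [Fin.sum_univ_two, h0, h1]]
      simp [Real.sqrt_sq_eq_abs]
    · have hv : ‖(EuclideanSpace.single 1 1 : EuclideanSpace ℂ (Fin 2))‖ = 1 := by
        rw [EuclideanSpace.norm_single]; norm_num
      have hb := T.le_opNorm (EuclideanSpace.single 1 1)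
      rw [hv, mul_one] at hb
      refine le_trans (le_of_eq ?_) hb
      rw [EuclideanSpace.norm_eq]
      have h0 : (T (EuclideanSpace.single 1 1)) 0 = y := by
        rw [happ]
        simp [Matrix.mulVec, dotProduct, Fin.sum_univ_two, hN, EuclideanSpace.single_apply]
      have h1 : (T (EuclideanSpace.single 1 1)) 1 = 0 := by
        rw [happ]
        simp [Matrix.mulVec, dotProduct, Fin.sum_univ_two, hN, EuclideanSpace.single_apply]
      rw [show ∑ i, ‖(T (EuclideanSpace.single 1 1)) i‖ ^ 2 = ‖y‖^2 + ‖(0:ℂ)‖^2 by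
        rw [Fin.sum_univ_two, h0, h1]]
      simp [Real.sqrt_sq_eq_abs]

end Aux

/-- For a `2 × 2` matrix `X` with normalized trace `τ`, unitarily equivalent
to `[[τ, y],[x, τ]]`, the inradius of the numerical range equals
`‖X - τI‖ - ‖(|X - τI| + |Xᴴ - τ̄I|)/2‖`, and this common value is `||x| - |y||/2`. -/
theorem stmt19 (X : Matrix (Fin 2) (Fin 2) ℂ) (τ x y : ℂ)
    (hτ : τ = Matrix.trace X / 2)
    (U : Matrix.unitaryGroup (Fin 2) ℂ)
    (hX : X = (U : Matrix (Fin 2) (Fin 2) ℂ) * !![τ, y; x, τ] *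
      (U : Matrix (Fin 2) (Fin 2) ℂ)ᴴ) :
    inRad (numRange X) =
      opNorm (X - τ • 1) -
        opNorm (matAbs (X - τ • 1) + matAbs (Xᴴ - (starRingEnd ℂ) τ • 1)) / 2 ∧
    inRad (numRange X) = |‖x‖ - ‖y‖| / 2 := by
  set A := ‖x‖ with hA
  set B := ‖y‖ with hB
  set V : Matrix (Fin 2) (Fin 2) ℂ := (U : Matrix (Fin 2) (Fin 2) ℂ) with hV
  set N : Matrix (Fin 2) (Fin 2) ℂ := !![0, y; x, 0] with hN
  have hU1 : V * Vᴴ = 1 := by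
    simpa [Matrix.star_eq_conjTranspose] using Unitary.mul_star_self_of_mem U.2
  have hscal : ∀ c : ℂ, V * (c • (1 : Matrix (Fin 2) (Fin 2) ℂ)) * Vᴴ = c • 1 := by
    intro c
    rw [Matrix.mul_smul, Matrix.smul_mul, Matrix.mul_one, hU1]
  have hMN : !![τ, y; x, τ] - τ • (1 : Matrix (Fin 2) (Fin 2) ℂ) = N := by
    ext i j
    fin_cases i <;> fin_cases j <;> simp [Matrix.one_apply, hN]
  have hXτ : X - τ • 1 = V * N * Vᴴ := by
    rw [hX, ← hMN, Matrix.mul_sub, Matrix.sub_mul]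
    congr 1
    exact (hscal τ).symm
  have hXH : Xᴴ - (starRingEnd ℂ) τ • 1 = V * Nᴴ * Vᴴ := by
    have h1 : Xᴴ - (starRingEnd ℂ) τ • 1 = (X - τ • 1)ᴴ := by
      rw [Matrix.conjTranspose_sub, Matrix.conjTranspose_smul, Matrix.conjTranspose_one,
        RCLike.star_def]
    rw [h1, hXτ, Matrix.conjTranspose_mul, Matrix.conjTranspose_mul,
      Matrix.conjTranspose_conjTranspose]
    noncomm_ring
  -- numerical range side
  have hnr : inRad (numRange X) = |A - B| / 2 := by
    rw [hX, hV, numRange_conj, numRange_param, inRad_ellipse]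
  -- matAbs side
  have hNH : Nᴴ = !![0, (starRingEnd ℂ) x; (starRingEnd ℂ) y, 0] := by
    ext i j
    fin_cases i <;> fin_cases j <;> simp [hN]
  have hD1 : matAbs N = Matrix.diagonal ![((A : ℝ) : ℂ), ((B : ℝ) : ℂ)] := matAbs_N x y
  have hD2 : matAbs Nᴴ = Matrix.diagonal ![((B : ℝ) : ℂ), ((A : ℝ) : ℂ)] := by
    rw [hNH, matAbs_N ((starRingEnd ℂ) y) ((starRingEnd ℂ) x), Complex.norm_conj,
      Complex.norm_conj, ← hA, ← hB]
  have hsum : matAbs N + matAbs Nᴴ = (((A + B : ℝ)) : ℂ) • (1 : Matrix (Fin 2) (Fin 2) ℂ) := by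
    rw [hD1, hD2]
    ext i j
    fin_cases i <;> fin_cases j <;>
      simp [Matrix.diagonal, Matrix.one_apply] <;> push_cast <;> ring
  have habs_sum : matAbs (X - τ • 1) + matAbs (Xᴴ - (starRingEnd ℂ) τ • 1)
      = (((A + B : ℝ)) : ℂ) • (1 : Matrix (Fin 2) (Fin 2) ℂ) := by
    rw [hXτ, hXH, hV, matAbs_conj, matAbs_conj, ← Matrix.add_mul, ← Matrix.mul_add, hsum,
      ← hV, hscal]
  have hop1 : opNorm (X - τ • 1) = max A B := by
    rw [hXτ, hV, opNorm_conj, opNorm_N]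
  have hop2 : opNorm (matAbs (X - τ • 1) + matAbs (Xᴴ - (starRingEnd ℂ) τ • 1)) = A + B := by
    rw [habs_sum, opNorm_smul_one]
    have : 0 ≤ A + B := by positivity
    exact abs_of_nonneg this
  have harith : max A B - (A + B) / 2 = |A - B| / 2 := by
    rcases le_total A B with h | h
    · rw [max_eq_right h, abs_of_nonpos (by linarith)]; ring
    · rw [max_eq_left h, abs_of_nonneg (by linarith)]; ring
  refine ⟨?_, hnr⟩
  rw [hnr, hop1, hop2, harith]
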